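/- arXiv:1904.02776 — 3 statements merged into one kernel-verified Lean document; each statement's English description precedes it below -/
import Mathlib

section
/- For every real β > 0, the infinite product Z^F(β) = ∏_{p prime} (1 + e^{-βp}) converges to a finite positive real number, the series ∑_{n=0}^∞ Q(n) e^{-nβ} converges, and the two are equal: ∏_{p prime} (1 + e^{-βp}) = ∑_{n=0}^∞ Q(n) e^{-nβ}. -/
/-- `Q n` is the number of partitions of `n` into distinct primes, i.e. the number of
finite sets of prime numbers whose elements sum to `n` (with `Q 0 = 1`). -/
noncomputable def Q (n : ℕ) : ℕ :=
  Nat.card {s : Finset ℕ // (∀ p ∈ s, Nat.Prime p) ∧ ∑ p ∈ s, p = n}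

namespace FPF

abbrev emb : Nat.Primes ↪ ℕ := Function.Embedding.subtype Nat.Prime

def σ (s : Finset Nat.Primes) : ℕ := ∑ p ∈ s, (p : ℕ)

lemma sigma_bound {s : Finset Nat.Primes} {p : Nat.Primes} (hp : p ∈ s) : (p : ℕ) ≤ σ s :=
  Finset.single_le_sum (f := fun q : Nat.Primes => (q : ℕ)) (fun _ _ => Nat.zero_le _) hp

instance fiberFinite (n : ℕ) : Finite {s : Finset Nat.Primes // σ s = n} := by
  have hmem : ∀ s : {s : Finset Nat.Primes // σ s = n},
      s.1.map emb ∈ (Finset.range (n + 1)).powerset := by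
    rintro ⟨s, hs⟩
    simp only [Finset.mem_powerset]
    intro x hx
    simp only [Finset.mem_map] at hx
    obtain ⟨p, hp, rfl⟩ := hx
    rw [Finset.mem_range, ← hs]; exact Nat.lt_succ_of_le (sigma_bound hp)
  exact Finite.of_injective
    (fun s => (⟨s.1.map emb, hmem s⟩ : ((Finset.range (n + 1)).powerset : Finset (Finset ℕ))))
    (fun a b hab => Subtype.ext (Finset.map_injective emb
      (by simpa using congrArg Subtype.val hab)))

def fiberEquiv (n : ℕ) :
    {s : Finset Nat.Primes // σ s = n} ≃
      {s : Finset ℕ // (∀ p ∈ s, Nat.Prime p) ∧ ∑ p ∈ s, p = n} where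
  toFun t := ⟨t.1.map emb, ⟨fun p hp => by
      obtain ⟨q, hq, rfl⟩ := Finset.mem_map.mp hp; exact q.2,
    by rw [Finset.sum_map]; exact t.2⟩⟩
  invFun s := ⟨s.1.subtype Nat.Prime, by
      have h : (s.1.subtype Nat.Prime).map (Function.Embedding.subtype Nat.Prime) = s.1 := by
        rw [Finset.subtype_map, Finset.filter_true_of_mem s.2.1]
      have := s.2.2
      rw [← h, Finset.sum_map] at this
      exact this⟩
  left_inv t := by
    apply Subtype.ext
    ext q
    show (show Subtype Nat.Prime from q) ∈ Finset.subtype Nat.Prime (Finset.map emb t.1) ↔ q ∈ t.1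
    rw [Finset.mem_subtype, Finset.mem_map]
    constructor
    · rintro ⟨r, hr, h⟩
      rwa [show q = r from Subtype.ext h.symm]
    · intro h; exact ⟨q, h, rfl⟩
  right_inv s := by
    apply Subtype.ext
    show (Finset.subtype Nat.Prime s.1).map (Function.Embedding.subtype Nat.Prime) = s.1
    rw [Finset.subtype_map, Finset.filter_true_of_mem s.2.1]

lemma card_fiber (n : ℕ) : Nat.card {s : Finset Nat.Primes // σ s = n} = Q n :=
  Nat.card_congr (fiberEquiv n)

end FPF

open FPF in
/-- For every `β > 0`, the infinite product `∏_{p prime} (1 + e^{-βp})` converges to a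
finite positive real number, the series `∑_{n ≥ 0} Q n * e^{-nβ}` converges, and the two
are equal. -/
theorem fermionic_partition_function_eq_generating_series {β : ℝ} (hβ : 0 < β) :
    Multipliable (fun p : Nat.Primes => 1 + Real.exp (-β * (p : ℕ))) ∧
    0 < ∏' p : Nat.Primes, (1 + Real.exp (-β * (p : ℕ))) ∧
    Summable (fun n : ℕ => (Q n : ℝ) * Real.exp (-(n : ℝ) * β)) ∧
    ∏' p : Nat.Primes, (1 + Real.exp (-β * (p : ℕ)))
      = ∑' n : ℕ, (Q n : ℝ) * Real.exp (-(n : ℝ) * β) := by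
  set f : Nat.Primes → ℝ := fun p => Real.exp (-β * (p : ℕ)) with hfdef
  have hf0 : ∀ p, 0 ≤ f p := fun p => (Real.exp_pos _).le
  have hfs : Summable f := by
    have hgeo : Summable (fun n : ℕ => Real.exp (-β) ^ n) :=
      summable_geometric_of_lt_one (Real.exp_pos _).le
        (Real.exp_lt_one_iff.mpr (by linarith))
    have := hgeo.comp_injective Nat.Primes.coe_nat_injective
    apply this.congr
    intro p
    simp only [Function.comp]
    rw [← Real.exp_nat_mul, mul_comm]
  set g : Finset Nat.Primes → ℝ := fun s => ∏ p ∈ s, f p with hgdef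
  have hg0 : ∀ s, 0 ≤ g s := fun s => Finset.prod_nonneg (fun p _ => hf0 p)
  have hprod_eq : ∀ F : Finset Nat.Primes,
      ∏ p ∈ F, (1 + f p) = ∑ s ∈ F.powerset, g s := by
    intro F
    simp_rw [add_comm (1 : ℝ)]
    rw [Finset.prod_add]
    simp [hgdef]
  have hbound : ∀ F : Finset Nat.Primes, ∏ p ∈ F, (1 + f p) ≤ Real.exp (∑' p, f p) := by
    intro F
    calc ∏ p ∈ F, (1 + f p) ≤ ∏ p ∈ F, Real.exp (f p) :=
          Finset.prod_le_prod (fun p _ => by positivity)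
            (fun p _ => by have := Real.add_one_le_exp (f p); linarith)
      _ = Real.exp (∑ p ∈ F, f p) := (Real.exp_sum F f).symm
      _ ≤ Real.exp (∑' p, f p) := Real.exp_le_exp.mpr (Summable.sum_le_tsum F (fun p _ => hf0 p) hfs)
  have hgsum : Summable g := by
    apply summable_of_sum_le hg0
    intro u
    calc ∑ s ∈ u, g s ≤ ∑ s ∈ (u.sup id).powerset, g s := by
          apply Finset.sum_le_sum_of_subset_of_nonneg
          · intro s hs
            exact Finset.mem_powerset.mpr (Finset.le_sup (f := id) hs)
          · intro s _ _; exact hg0 s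
      _ = ∏ p ∈ u.sup id, (1 + f p) := (hprod_eq _).symm
      _ ≤ Real.exp (∑' p, f p) := hbound _
  have hP : HasProd (fun p : Nat.Primes => 1 + f p) (∑' s, g s) := by
    have hpow : Filter.Tendsto (fun F : Finset Nat.Primes => F.powerset)
        Filter.atTop Filter.atTop := by
      apply Filter.tendsto_atTop_atTop.mpr
      intro A
      refine ⟨A.sup id, fun F hF => ?_⟩
      intro s hsA
      exact Finset.mem_powerset.mpr (le_trans (Finset.le_sup (f := id) hsA) hF)
    have h2 := hgsum.hasSum.comp hpow
    rw [HasProd]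
    convert h2 using 1
    funext F
    exact hprod_eq F
    rfl
  have hone_le : (1 : ℝ) ≤ ∑' s, g s := by
    have := Summable.le_tsum hgsum ∅ (fun s _ => hg0 s)
    simpa [hgdef] using this
  have hgs : ∀ s, g s = Real.exp (-(σ s : ℝ) * β) := by
    intro s
    rw [hgdef]
    simp only
    rw [← Real.exp_sum]
    congr 1
    rw [← Finset.mul_sum, σ]
    push_cast
    ring
  have hS' : HasSum (fun x : Σ n : ℕ, {s : Finset Nat.Primes // σ s = n} => g x.2.1)
      (∑' s, g s) :=
    (Equiv.sigmaFiberEquiv σ).hasSum_iff.mpr hgsum.hasSum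
  have hinner : ∀ n : ℕ, HasSum (fun s : {s : Finset Nat.Primes // σ s = n} => g s.1)
      ((Q n : ℝ) * Real.exp (-(n : ℝ) * β)) := by
    intro n
    have : Fintype {s : Finset Nat.Primes // σ s = n} := Fintype.ofFinite _
    have h := hasSum_fintype (fun s : {s : Finset Nat.Primes // σ s = n} => g s.1)
    convert h using 1
    rw [Finset.sum_congr rfl (fun s _ => by rw [hgs s.1, s.2])]
    rw [Finset.sum_const, nsmul_eq_mul]
    congr 1
    rw [← card_fiber n, Nat.card_eq_fintype_card]
    simp
  have hfinal : HasSum (fun n : ℕ => (Q n : ℝ) * Real.exp (-(n : ℝ) * β)) (∑' s, g s) :=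
    hS'.sigma hinner
  refine ⟨hP.multipliable, ?_, hfinal.summable, ?_⟩
  · rw [hP.tprod_eq]; linarith
  · rw [hP.tprod_eq, hfinal.tsum_eq]
end

section
/- The function y ↦ ln(y) · ln(1 + e^{-y}) is integrable on (0, ∞), the series ∑_{k=1}^∞ (-1)^{k-1} (ln k)/k² converges, and ∫_0^∞ ln(y) ln(1 + e^{-y}) dy = -( γ π²/12 + ∑_{k=1}^∞ (-1)^{k-1} (ln k)/k² ), where γ is the Euler–Mascheroni constant. -/
open Real MeasureTheory

namespace IntLogAux

open Set Filter




/-- Integrability of `log t * exp (-t)` on `(0, ∞)`. -/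
lemma intA : IntegrableOn (fun t : ℝ => Real.log t * Real.exp (-t)) (Set.Ioi 0) := by
  have h1 : IntegrableOn (fun t : ℝ => Real.log t * Real.exp (-t)) (Set.Ioc 0 1) := by
    have hrpow : IntegrableOn (fun t : ℝ => t ^ (-(1:ℝ)/2)) (Set.Ioc 0 1) := by
      have := (intervalIntegral.intervalIntegrable_rpow' (a := 0) (b := 1)
        (r := -(1:ℝ)/2) (by norm_num))
      rwa [intervalIntegrable_iff_integrableOn_Ioc_of_le zero_le_one] at this
    refine Integrable.mono' (hrpow.const_mul 2) ?_ ?_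
    · refine ContinuousOn.aestronglyMeasurable ?_ measurableSet_Ioc
      exact (Real.continuousOn_log.mono (fun x hx => ne_of_gt hx.1)).mul
        (Real.continuous_exp.comp continuous_neg).continuousOn
    · refine (ae_restrict_mem measurableSet_Ioc).mono fun t ht => ?_
      have ht0 : 0 < t := ht.1
      have h1 : ‖Real.log t * Real.exp (-t)‖ ≤ |Real.log t| := by
        rw [norm_mul, Real.norm_eq_abs, Real.norm_eq_abs, abs_exp]
        nlinarith [abs_nonneg (Real.log t), Real.exp_le_one_iff.mpr (neg_nonpos.mpr ht0.le),
          Real.exp_pos (-t)]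
      have h2 : |Real.log t| ≤ 2 * t ^ (-(1:ℝ)/2) := by
        have hlt : Real.log t ≤ 0 := Real.log_nonpos ht0.le ht.2
        rw [abs_of_nonpos hlt]
        have h3 : Real.log (t ^ (-(1:ℝ)/2)) ≤ t ^ (-(1:ℝ)/2) - 1 :=
          Real.log_le_sub_one_of_pos (Real.rpow_pos_of_pos ht0 _)
        rw [Real.log_rpow ht0] at h3
        nlinarith [Real.rpow_pos_of_pos ht0 (-(1:ℝ)/2)]
      have := h1.trans h2
      simpa [mul_comm] using this
  have h2 : IntegrableOn (fun t : ℝ => Real.log t * Real.exp (-t)) (Set.Ioi 1) := by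
    refine integrable_of_isBigO_exp_neg (a := 1) one_half_pos ?_ ?_
    · exact (Real.continuousOn_log.mono (fun x hx => by
        simp only [Set.mem_compl_iff, Set.mem_singleton_iff]
        exact ne_of_gt (lt_of_lt_of_le one_pos hx))).mul
        (Real.continuous_exp.comp continuous_neg).continuousOn
    · rw [Asymptotics.isBigO_iff]
      refine ⟨1, ?_⟩
      filter_upwards [eventually_ge_atTop (1:ℝ)] with t ht
      have ht0 : (0:ℝ) < t := lt_of_lt_of_le one_pos ht
      have hlog : Real.log t ≤ t := (Real.log_le_sub_one_of_pos ht0).trans (by linarith)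
      have hexp : t ≤ Real.exp ((1/2) * t) := by
        have h4 : t/4 + 1 ≤ Real.exp (t/4) := Real.add_one_le_exp (t/4)
        have h5 : Real.exp ((1/2) * t) = Real.exp (t/4) * Real.exp (t/4) := by
          rw [← Real.exp_add]; ring_nf
        nlinarith [Real.exp_pos (t/4), sq_nonneg (1 - t/4), sq_nonneg (t/4)]
      have hlog0 : 0 ≤ Real.log t := Real.log_nonneg ht
      rw [norm_mul, Real.norm_eq_abs, Real.norm_eq_abs, abs_exp, Real.norm_eq_abs, abs_exp,
        abs_of_nonneg hlog0, one_mul]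
      have : Real.log t * Real.exp (-t) ≤ Real.exp ((1/2)*t) * Real.exp (-t) := by
        have := (Real.exp_pos (-t)).le
        nlinarith
      calc Real.log t * Real.exp (-t) ≤ Real.exp ((1/2)*t) * Real.exp (-t) := this
        _ = Real.exp (-(1/2) * t) := by rw [← Real.exp_add]; ring_nf
  exact (h1.union h2).mono_set (fun x hx => by
    rcases le_or_gt x 1 with h | h
    · exact Or.inl ⟨hx, h⟩
    · exact Or.inr h)




lemma baseVal : ∫ t in Set.Ioi (0:ℝ), Real.log t * Real.exp (-t)
    = -Real.eulerMascheroniConstant := by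
  have h1 : HasDerivAt Complex.GammaIntegral
      (∫ t : ℝ in Set.Ioi 0, (t:ℂ) ^ ((1:ℂ) - 1) * (Real.log t * Real.exp (-t))) 1 :=
    Complex.hasDerivAt_GammaIntegral (by norm_num)
  have hev : Complex.Gamma =ᶠ[nhds (1:ℂ)] Complex.GammaIntegral := by
    have h : ∀ᶠ s : ℂ in nhds 1, 0 < s.re := by
      have := (Complex.continuous_re.tendsto (1:ℂ)).eventually
        (eventually_gt_nhds (show (0:ℝ) < (1:ℂ).re by norm_num))
      exact this
    filter_upwards [h] with s hs using Complex.Gamma_eq_integral hs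
  have h2 : HasDerivAt Complex.Gamma
      (∫ t : ℝ in Set.Ioi 0, (t:ℂ) ^ ((1:ℂ) - 1) * (Real.log t * Real.exp (-t))) 1 :=
    h1.congr_of_eventuallyEq hev
  have h4 : (∫ t : ℝ in Set.Ioi 0, (t:ℂ) ^ ((1:ℂ) - 1) * (Real.log t * Real.exp (-t)))
      = -(Real.eulerMascheroniConstant : ℂ) := h2.unique Complex.hasDerivAt_Gamma_one
  have h5 : (∫ t : ℝ in Set.Ioi 0, (t:ℂ) ^ ((1:ℂ) - 1) * (Real.log t * Real.exp (-t)))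
      = ((∫ t in Set.Ioi (0:ℝ), Real.log t * Real.exp (-t) : ℝ) : ℂ) := by
    have h6 : (∫ t in Set.Ioi (0:ℝ), ((Real.log t * Real.exp (-t) : ℝ) : ℂ))
        = ((∫ t in Set.Ioi (0:ℝ), Real.log t * Real.exp (-t) : ℝ) : ℂ) := integral_ofReal
    rw [← h6]
    refine setIntegral_congr_fun measurableSet_Ioi (fun t ht => ?_)
    simp [Complex.ofReal_mul]
  rw [h5] at h4
  exact_mod_cast h4





noncomputable def g (c : ℝ) : ℝ → ℝ := fun t => (Real.log t - Real.log c) * Real.exp (-t)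

lemma hg (c : ℝ) : IntegrableOn (g c) (Set.Ioi 0) := by
  have h2 : IntegrableOn (fun t : ℝ => Real.log c * Real.exp (-t)) (Set.Ioi 0) := by
    have := (exp_neg_integrableOn_Ioi 0 (one_pos)).const_mul (Real.log c)
    simp at this; exact this
  have := intA.sub h2
  refine IntegrableOn.congr_fun this (fun t ht => ?_) measurableSet_Ioi
  show Real.log t * Real.exp (-t) - Real.log c * Real.exp (-t) = _
  simp only [g]; ring

lemma intC {c : ℝ} (hc : 0 < c) :
    IntegrableOn (fun y : ℝ => Real.log y * Real.exp (-(c*y))) (Set.Ioi 0) := by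
  have h1 : IntegrableOn (fun y : ℝ => g c (c*y)) (Set.Ioi 0) := by
    rw [integrableOn_Ioi_comp_mul_left_iff (g c) 0 hc, mul_zero]
    exact hg c
  refine IntegrableOn.congr_fun h1 (fun y hy => ?_) measurableSet_Ioi
  have : Real.log (c*y) = Real.log c + Real.log y := Real.log_mul hc.ne' (ne_of_gt hy)
  show g c (c*y) = _
  simp only [g, this]; ring

lemma valC {c : ℝ} (hc : 0 < c) :
    ∫ y in Set.Ioi (0:ℝ), Real.log y * Real.exp (-(c*y))
      = -(Real.eulerMascheroniConstant + Real.log c)/c := by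
  have step1 : ∫ y in Set.Ioi (0:ℝ), Real.log y * Real.exp (-(c*y))
      = ∫ y in Set.Ioi (0:ℝ), g c (c*y) := by
    refine setIntegral_congr_fun measurableSet_Ioi (fun y hy => ?_)
    have : Real.log (c*y) = Real.log c + Real.log y := Real.log_mul hc.ne' (ne_of_gt hy)
    simp only [g, this]; ring
  have step2 := integral_comp_mul_left_Ioi (g c) 0 hc
  rw [mul_zero] at step2
  have h2 : IntegrableOn (fun t : ℝ => Real.log c * Real.exp (-t)) (Set.Ioi 0) := by
    have := (exp_neg_integrableOn_Ioi 0 (one_pos)).const_mul (Real.log c)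
    simp at this; exact this
  have step3 : ∫ t in Set.Ioi (0:ℝ), g c t
      = -Real.eulerMascheroniConstant - Real.log c := by
    have heq : ∫ t in Set.Ioi (0:ℝ), g c t
        = ∫ t in Set.Ioi (0:ℝ),
            (Real.log t * Real.exp (-t) - Real.log c * Real.exp (-t)) := by
      refine setIntegral_congr_fun measurableSet_Ioi (fun t ht => ?_)
      simp only [g]; ring
    rw [heq, integral_sub intA h2, baseVal, integral_const_mul]
    have : ∫ t in Set.Ioi (0:ℝ), Real.exp (-t) = 1 := integral_exp_neg_Ioi_zero
    rw [this]; ring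
  rw [step1, step2, step3, smul_eq_mul]
  field_simp
  ring

/-- abs version for norm bounds -/
lemma normC {c : ℝ} (hc : 1 ≤ c) :
    ∫ y in Set.Ioi (0:ℝ), ‖Real.log y * Real.exp (-(c*y))‖
      ≤ ((∫ t in Set.Ioi (0:ℝ), |Real.log t| * Real.exp (-t)) + Real.log c)/c := by
  have hc0 : (0:ℝ) < c := lt_of_lt_of_le one_pos hc
  set A : ℝ := ∫ t in Set.Ioi (0:ℝ), |Real.log t| * Real.exp (-t) with hA
  -- the function |g c| is integrable
  have hgn : IntegrableOn (fun t : ℝ => |Real.log t - Real.log c| * Real.exp (-t))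
      (Set.Ioi 0) := by
    have := (hg c).norm
    refine IntegrableOn.congr_fun this (fun t ht => ?_) measurableSet_Ioi
    simp [g, abs_mul, abs_of_pos (Real.exp_pos _)]
  have hmaj : IntegrableOn (fun t : ℝ => (|Real.log t| + Real.log c) * Real.exp (-t))
      (Set.Ioi 0) := by
    have h1 : IntegrableOn (fun t : ℝ => |Real.log t| * Real.exp (-t)) (Set.Ioi 0) := by
      have := intA.norm
      refine IntegrableOn.congr_fun this (fun t ht => ?_) measurableSet_Ioi
      simp [abs_mul, abs_of_pos (Real.exp_pos _)]
    have h2 : IntegrableOn (fun t : ℝ => Real.log c * Real.exp (-t)) (Set.Ioi 0) := by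
      have := (exp_neg_integrableOn_Ioi 0 (one_pos)).const_mul (Real.log c)
      simp at this; exact this
    have := h1.add h2
    refine IntegrableOn.congr_fun this (fun t ht => ?_) measurableSet_Ioi
    show |Real.log t| * Real.exp (-t) + Real.log c * Real.exp (-t) = _
    ring
  have step1 : ∫ y in Set.Ioi (0:ℝ), ‖Real.log y * Real.exp (-(c*y))‖
      = ∫ y in Set.Ioi (0:ℝ), (fun t => |Real.log t - Real.log c| * Real.exp (-t)) (c*y) := by
    refine setIntegral_congr_fun measurableSet_Ioi (fun y hy => ?_)
    have : Real.log (c*y) = Real.log c + Real.log y := Real.log_mul hc0.ne' (ne_of_gt hy)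
    simp only [norm_mul, Real.norm_eq_abs, Real.abs_exp, this]
    congr 1
    congr 1
    ring
  have step2 := integral_comp_mul_left_Ioi
    (fun t => |Real.log t - Real.log c| * Real.exp (-t)) 0 hc0
  rw [mul_zero] at step2
  have step3 : ∫ t in Set.Ioi (0:ℝ), |Real.log t - Real.log c| * Real.exp (-t)
      ≤ A + Real.log c := by
    have hmono : ∫ t in Set.Ioi (0:ℝ), |Real.log t - Real.log c| * Real.exp (-t)
        ≤ ∫ t in Set.Ioi (0:ℝ), (|Real.log t| + Real.log c) * Real.exp (-t) := by
      refine setIntegral_mono_on hgn hmaj measurableSet_Ioi (fun t ht => ?_)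
      have h3 : |Real.log t - Real.log c| ≤ |Real.log t| + Real.log c := by
        have := abs_sub (Real.log t) (Real.log c)
        have h4 : |Real.log c| = Real.log c := abs_of_nonneg (Real.log_nonneg hc)
        calc |Real.log t - Real.log c| ≤ |Real.log t| + |Real.log c| := abs_sub _ _
          _ = |Real.log t| + Real.log c := by rw [h4]
      exact mul_le_mul_of_nonneg_right h3 (Real.exp_pos _).le
    have heq : ∫ t in Set.Ioi (0:ℝ), (|Real.log t| + Real.log c) * Real.exp (-t)
        = A + Real.log c := by
      have h1 : IntegrableOn (fun t : ℝ => |Real.log t| * Real.exp (-t)) (Set.Ioi 0) := by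
        have := intA.norm
        refine IntegrableOn.congr_fun this (fun t ht => ?_) measurableSet_Ioi
        simp [abs_mul, abs_of_pos (Real.exp_pos _)]
      have h2 : IntegrableOn (fun t : ℝ => Real.log c * Real.exp (-t)) (Set.Ioi 0) := by
        have := (exp_neg_integrableOn_Ioi 0 (one_pos)).const_mul (Real.log c)
        simp at this; exact this
      have heq2 : ∫ t in Set.Ioi (0:ℝ), (|Real.log t| + Real.log c) * Real.exp (-t)
          = ∫ t in Set.Ioi (0:ℝ),
              (|Real.log t| * Real.exp (-t) + Real.log c * Real.exp (-t)) := by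
        refine setIntegral_congr_fun measurableSet_Ioi (fun t ht => ?_)
        ring
      rw [heq2, integral_add h1 h2, integral_const_mul, integral_exp_neg_Ioi_zero]
      simp [hA]
    exact hmono.trans_eq heq
  rw [step1, step2, smul_eq_mul]
  rw [div_eq_inv_mul]
  exact mul_le_mul_of_nonneg_left step3 (inv_nonneg.mpr hc0.le)




lemma h6 : HasSum (fun n : ℕ => (1:ℝ)/((n:ℝ)+1)^2) (π^2/6) := by
  have h := hasSum_zeta_two
  have h2 := (hasSum_nat_add_iff' (f := fun n : ℕ => (1:ℝ)/(n:ℝ)^2) 1).mpr h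
  simp only [Finset.range_one, Finset.sum_singleton, Nat.cast_zero] at h2
  norm_num at h2
  convert h2 using 2 with n
  · rfl
  push_cast
  ring_nf

lemma eta2 : HasSum (fun j : ℕ => (-1:ℝ)^j / ((j:ℝ)+1)^2) (π^2/12) := by
  have hodd : HasSum (fun n : ℕ => if Odd n then (1:ℝ)/((n:ℝ)+1)^2 else 0) (π^2/24) := by
    have hinj : Function.Injective (fun m : ℕ => 2*m+1) := by
      intro a b hab; dsimp at hab; omega
    rw [← Function.Injective.hasSum_iff hinj ?_]
    · have h4 := h6.mul_left (1/4)
      have heqf : ((fun n : ℕ => if Odd n then (1:ℝ)/((n:ℝ)+1)^2 else 0)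
          ∘ (fun m : ℕ => 2*m+1)) = fun m : ℕ => (1/4) * ((1:ℝ)/((m:ℝ)+1)^2) := by
        funext m
        have hoddm : Odd (2*m+1) := ⟨m, by ring⟩
        simp only [Function.comp_apply, hoddm, if_true]
        have : ((2*m+1 : ℕ) : ℝ) + 1 = 2*((m:ℝ)+1) := by push_cast; ring
        rw [this]
        field_simp
        ring
      rw [heqf]
      convert h4 using 1
      · rfl
      ring
    · intro x hx
      have : ¬ Odd x := by
        simp only [Set.mem_range] at hx
        intro ⟨m, hm⟩
        exact hx ⟨m, by omega⟩
      simp [this]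
  have := h6.sub (hodd.mul_left 2)
  have heq : (fun j : ℕ => (1:ℝ)/((j:ℝ)+1)^2
      - 2 * (if Odd j then (1:ℝ)/((j:ℝ)+1)^2 else 0))
      = fun j : ℕ => (-1:ℝ)^j / ((j:ℝ)+1)^2 := by
    funext j
    rcases Nat.even_or_odd j with hj | hj
    · rw [if_neg (by simpa using hj), hj.neg_one_pow]
      ring
    · rw [if_pos hj, hj.neg_one_pow]
      ring
  rw [heq] at this
  convert this using 1
  · rfl
  ring

lemma sumInvSq : Summable (fun j : ℕ => (((j:ℝ)+1)^2)⁻¹) := by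
  have := h6.summable
  simpa [one_div] using this

lemma log_le_two_sqrt {x : ℝ} (hx : 1 ≤ x) : Real.log x ≤ 2 * Real.sqrt x := by
  have hx0 : 0 < x := lt_of_lt_of_le one_pos hx
  have h1 : Real.log (Real.sqrt x) ≤ Real.sqrt x - 1 :=
    Real.log_le_sub_one_of_pos (Real.sqrt_pos.mpr hx0)
  rw [Real.log_sqrt hx0.le] at h1
  nlinarith [Real.sqrt_nonneg x]

lemma sumLog : Summable (fun j : ℕ => Real.log ((j:ℝ)+1) / ((j:ℝ)+1)^2) := by
  have hmaj : Summable (fun j : ℕ => 2 * (((j:ℝ)+1) ^ ((3:ℝ)/2))⁻¹) := by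
    have h1 : Summable (fun n : ℕ => ((n:ℝ) ^ ((3:ℝ)/2))⁻¹) :=
      Real.summable_nat_rpow_inv.mpr (by norm_num)
    have h2 := (summable_nat_add_iff 1).mpr h1
    refine (h2.mul_left 2).congr (fun n => ?_)
    push_cast
    ring_nf
  refine Summable.of_nonneg_of_le (fun j => ?_) (fun j => ?_) hmaj
  · have h1 : (0:ℝ) ≤ Real.log ((j:ℝ)+1) := Real.log_nonneg (by have := Nat.cast_nonneg (α := ℝ) j; linarith)
    positivity
  · have hj1 : (1:ℝ) ≤ (j:ℝ)+1 := by have := Nat.cast_nonneg (α := ℝ) j; linarith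
    have hj0 : (0:ℝ) < (j:ℝ)+1 := by positivity
    have h1 : Real.log ((j:ℝ)+1) ≤ 2 * Real.sqrt ((j:ℝ)+1) := log_le_two_sqrt hj1
    have h2 : Real.sqrt ((j:ℝ)+1) = ((j:ℝ)+1) ^ ((1:ℝ)/2) := Real.sqrt_eq_rpow _
    rw [div_le_iff₀ (by positivity)]
    have h3 : (((j:ℝ)+1) ^ ((3:ℝ)/2))⁻¹ * ((j:ℝ)+1)^2 = ((j:ℝ)+1) ^ ((1:ℝ)/2) := by
      rw [← Real.rpow_natCast ((j:ℝ)+1) 2, ← Real.rpow_neg hj0.le, ← Real.rpow_add hj0]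
      norm_num
    calc Real.log ((j:ℝ)+1) ≤ 2 * Real.sqrt ((j:ℝ)+1) := h1
      _ = 2 * ((j:ℝ)+1) ^ ((1:ℝ)/2) := by rw [h2]
      _ = 2 * (((j:ℝ)+1) ^ ((3:ℝ)/2))⁻¹ * ((j:ℝ)+1)^2 := by rw [mul_assoc, h3]

lemma sumS : Summable (fun j : ℕ => (-1 : ℝ) ^ j * Real.log ((j:ℝ) + 1) / ((j:ℝ) + 1) ^ 2) := by
  refine Summable.of_norm ?_
  refine sumLog.congr (fun j => ?_)
  have h1 : (0:ℝ) ≤ Real.log ((j:ℝ)+1) := Real.log_nonneg (by have := Nat.cast_nonneg (α := ℝ) j; linarith)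
  rw [Real.norm_eq_abs, abs_div, abs_mul, abs_pow, abs_neg, abs_one, one_pow, one_mul,
    abs_of_nonneg h1, abs_of_nonneg (by positivity : (0:ℝ) ≤ ((j:ℝ)+1)^2)]

lemma keySummable (B : ℝ) :
    Summable (fun j : ℕ => (B + Real.log ((j:ℝ)+1)) / ((j:ℝ)+1)^2) := by
  have h1 := (sumInvSq.mul_left B).add sumLog
  refine h1.congr (fun j => ?_)
  field_simp




lemma hasSumF {y : ℝ} (hy : 0 < y) :
    HasSum (fun j : ℕ => (-1:ℝ)^j / ((j:ℝ)+1) * (Real.log y * Real.exp (-(((j:ℝ)+1)*y))))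
      (Real.log y * Real.log (1 + Real.exp (-y))) := by
  have habs : |(-Real.exp (-y))| < 1 := by
    rw [abs_neg, abs_of_pos (Real.exp_pos _)]
    exact Real.exp_lt_one_iff.mpr (neg_lt_zero.mpr hy)
  have h := Real.hasSum_pow_div_log_of_abs_lt_one habs
  -- h : HasSum (fun n => (-exp (-y)) ^ (n+1) / (n+1)) (-log (1 - -exp (-y)))
  have h2 := (h.neg).mul_left (Real.log y)
  have hval : Real.log y * -(-Real.log (1 - -Real.exp (-y)))
      = Real.log y * Real.log (1 + Real.exp (-y)) := by
    rw [sub_neg_eq_add]; ring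
  rw [hval] at h2
  refine h2.congr_fun fun j => ?_
  have hpow : (-Real.exp (-y)) ^ (j+1) = -((-1:ℝ)^j * Real.exp (-(((j:ℝ)+1)*y))) := by
    rw [neg_pow]
    have : Real.exp (-y) ^ (j+1) = Real.exp (-(((j:ℝ)+1)*y)) := by
      rw [← Real.exp_nat_mul]
      congr 1
      push_cast
      ring
    rw [this, pow_succ]
    ring
  rw [hpow]
  field_simp


end IntLogAux

open IntLogAux Set Filter


/-- The function `y ↦ log y * log (1 + e^{-y})` is integrable on `(0, ∞)`, the series
`∑_{k ≥ 1} (-1)^{k-1} (log k) / k²` converges, and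
`∫_0^∞ log y * log (1 + e^{-y}) dy = -(γ π²/12 + ∑_{k ≥ 1} (-1)^{k-1} (log k)/k²)`,
where `γ` is the Euler–Mascheroni constant.  (The series is indexed here by
`k = j + 1` with `j : ℕ`.) -/
theorem integral_log_mul_log_one_add_exp_neg :
    IntegrableOn (fun y : ℝ => Real.log y * Real.log (1 + Real.exp (-y))) (Set.Ioi 0) ∧
    Summable (fun j : ℕ => (-1 : ℝ) ^ j * Real.log (j + 1) / (j + 1) ^ 2) ∧
    ∫ y in Set.Ioi (0 : ℝ), Real.log y * Real.log (1 + Real.exp (-y))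
      = -(Real.eulerMascheroniConstant * π ^ 2 / 12
          + ∑' j : ℕ, (-1 : ℝ) ^ j * Real.log (j + 1) / (j + 1) ^ 2) := by
  have hint : IntegrableOn (fun y : ℝ => Real.log y * Real.log (1 + Real.exp (-y)))
      (Set.Ioi 0) := by
    refine Integrable.mono' intA.norm ?_ ?_
    · refine ContinuousOn.aestronglyMeasurable ?_ measurableSet_Ioi
      refine (Real.continuousOn_log.mono (fun x hx => ne_of_gt hx)).mul ?_
      refine Continuous.continuousOn ?_
      exact Continuous.log (continuous_const.add (Real.continuous_exp.comp continuous_neg))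
        (fun x => by positivity)
    · refine (ae_restrict_mem measurableSet_Ioi).mono fun y hy => ?_
      have h1 : 0 < 1 + Real.exp (-y) := by positivity
      have h2 : Real.log (1 + Real.exp (-y)) ≤ Real.exp (-y) := by
        have := Real.log_le_sub_one_of_pos h1
        linarith
      have h3 : 0 ≤ Real.log (1 + Real.exp (-y)) :=
        Real.log_nonneg (by nlinarith [Real.exp_pos (-y)])
      rw [norm_mul, Real.norm_eq_abs, Real.norm_eq_abs, norm_mul, Real.norm_eq_abs,
        Real.norm_eq_abs, Real.abs_exp, abs_of_nonneg h3]
      exact mul_le_mul_of_nonneg_left h2 (abs_nonneg _)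
  -- the summands
  set F : ℕ → ℝ → ℝ := fun j y =>
    (-1:ℝ)^j / ((j:ℝ)+1) * (Real.log y * Real.exp (-(((j:ℝ)+1)*y))) with hF
  have hc : ∀ j : ℕ, (0:ℝ) < (j:ℝ)+1 := fun j => by positivity
  have hc1 : ∀ j : ℕ, (1:ℝ) ≤ (j:ℝ)+1 := fun j => by
    have := Nat.cast_nonneg (α := ℝ) j; linarith
  have hFint : ∀ j : ℕ, Integrable (F j) (volume.restrict (Set.Ioi 0)) := fun j =>
    (intC (hc j)).const_mul _
  set A : ℝ := ∫ t in Set.Ioi (0:ℝ), |Real.log t| * Real.exp (-t) with hA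
  have hnorm : ∀ j : ℕ, (∫ y in Set.Ioi (0:ℝ), ‖F j y‖)
      ≤ (A + Real.log ((j:ℝ)+1)) / ((j:ℝ)+1)^2 := by
    intro j
    have habs : ∀ y : ℝ, ‖F j y‖
        = (1/((j:ℝ)+1)) * ‖Real.log y * Real.exp (-(((j:ℝ)+1)*y))‖ := by
      intro y
      rw [hF]
      simp only [norm_mul, norm_div, norm_pow, norm_neg, norm_one, one_pow, Real.norm_eq_abs]
      rw [abs_of_pos (hc j)]
    have h1 : (∫ y in Set.Ioi (0:ℝ), ‖F j y‖)
        = (1/((j:ℝ)+1)) * ∫ y in Set.Ioi (0:ℝ), ‖Real.log y * Real.exp (-(((j:ℝ)+1)*y))‖ := by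
      rw [← integral_const_mul]
      exact setIntegral_congr_fun measurableSet_Ioi (fun y _ => habs y)
    rw [h1]
    have h2 := normC (hc1 j)
    have h3 : (0:ℝ) ≤ 1/((j:ℝ)+1) := by positivity
    calc (1/((j:ℝ)+1)) * ∫ y in Set.Ioi (0:ℝ), ‖Real.log y * Real.exp (-(((j:ℝ)+1)*y))‖
        ≤ (1/((j:ℝ)+1)) * ((A + Real.log ((j:ℝ)+1))/((j:ℝ)+1)) :=
          mul_le_mul_of_nonneg_left h2 h3
      _ = (A + Real.log ((j:ℝ)+1)) / ((j:ℝ)+1)^2 := by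
          rw [div_mul_div_comm, one_mul, ← pow_two]
  have hsummable : Summable (fun j : ℕ => ∫ y in Set.Ioi (0:ℝ), ‖F j y‖) := by
    refine Summable.of_nonneg_of_le (fun j => ?_) hnorm (keySummable A)
    exact integral_nonneg (fun y => norm_nonneg _)
  have interchange := integral_tsum_of_summable_integral_norm hFint hsummable
  have hpt : ∫ y in Set.Ioi (0:ℝ), (∑' j : ℕ, F j y)
      = ∫ y in Set.Ioi (0:ℝ), Real.log y * Real.log (1 + Real.exp (-y)) :=
    setIntegral_congr_fun measurableSet_Ioi (fun y hy => (hasSumF hy).tsum_eq)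
  have valF : ∀ j : ℕ, (∫ y in Set.Ioi (0:ℝ), F j y)
      = -(Real.eulerMascheroniConstant * ((-1:ℝ)^j / ((j:ℝ)+1)^2)
          + (-1:ℝ)^j * Real.log ((j:ℝ)+1) / ((j:ℝ)+1)^2) := by
    intro j
    have h1 : (∫ y in Set.Ioi (0:ℝ), F j y)
        = ((-1:ℝ)^j / ((j:ℝ)+1)) * ∫ y in Set.Ioi (0:ℝ),
            Real.log y * Real.exp (-(((j:ℝ)+1)*y)) := by
      rw [← integral_const_mul]
    rw [h1, valC (hc j)]
    have := (hc j).ne'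
    field_simp
  have hsum1 : Summable (fun j : ℕ =>
      Real.eulerMascheroniConstant * ((-1:ℝ)^j / ((j:ℝ)+1)^2)) :=
    eta2.summable.mul_left _
  have hsum2 := sumS
  have htsum : (∑' j : ℕ, ∫ y in Set.Ioi (0:ℝ), F j y)
      = -(Real.eulerMascheroniConstant * π^2/12
          + ∑' j : ℕ, (-1:ℝ)^j * Real.log ((j:ℝ)+1) / ((j:ℝ)+1)^2) := by
    rw [tsum_congr valF, tsum_neg, Summable.tsum_add hsum1 hsum2,
      (eta2.mul_left Real.eulerMascheroniConstant).tsum_eq]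
    ring_nf
  refine ⟨hint, sumS, ?_⟩
  rw [← hpt, ← interchange, htsum]
end

section
/- For every real β with 0 < β < 1, the two-term truncated asymptotic expression satisfies the closed-form evaluation: -(1/(β ln β)) ∫_0^∞ (1 + ln(y)/ln(β)) ln(1 + e^{-y}) dy = (1/(β ln β)) [ -π²/12 + (1/ln β)( γ π²/12 + ∑_{k=1}^∞ (-1)^{k-1} (ln k)/k² ) ], where γ is the Euler–Mascheroni constant and the integral on the left is finite. -/
open Real MeasureTheory

section Aux

lemma integral_log_mul_exp_eq :
    ∫ t in Set.Ioi (0:ℝ), Real.log t * Real.exp (-t) = -Real.eulerMascheroniConstant := by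
  have h1 : HasDerivAt Complex.GammaIntegral
      (∫ t : ℝ in Set.Ioi 0, (t:ℂ) ^ ((1:ℂ) - 1) * (Real.log t * Real.exp (-t))) 1 :=
    Complex.hasDerivAt_GammaIntegral (by norm_num)
  have h2 : HasDerivAt Complex.GammaIntegral (-(Real.eulerMascheroniConstant : ℂ)) 1 := by
    refine Complex.hasDerivAt_Gamma_one.congr_of_eventuallyEq ?_
    have hopen : IsOpen {s : ℂ | 0 < s.re} := isOpen_lt continuous_const Complex.continuous_re
    filter_upwards [hopen.mem_nhds (by norm_num : (0:ℝ) < (1:ℂ).re)] with s hs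
    exact (Complex.Gamma_eq_integral hs).symm
  have h3 := h2.unique h1
  have h4 : (∫ t : ℝ in Set.Ioi 0, (t:ℂ) ^ ((1:ℂ) - 1) * (Real.log t * Real.exp (-t)))
      = ((∫ t in Set.Ioi (0:ℝ), Real.log t * Real.exp (-t) : ℝ) : ℂ) := by
    rw [show (fun t : ℝ => (t:ℂ) ^ ((1:ℂ) - 1) * (Real.log t * Real.exp (-t)))
        = fun t : ℝ => ((Real.log t * Real.exp (-t) : ℝ) : ℂ) from funext fun t => by
      push_cast
      rw [sub_self, Complex.cpow_zero, one_mul]]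
    exact integral_ofReal
  rw [h4] at h3
  exact_mod_cast h3.symm

lemma log_integrableOn_Ioc : IntegrableOn Real.log (Set.Ioc (0:ℝ) 1) := by
  have h : IntegrableOn (fun y : ℝ => -Real.log y) (Set.Ioc (0:ℝ) 1) := by
    apply intervalIntegral.integrableOn_deriv_of_nonneg
      (g := fun y : ℝ => y - y * Real.log y)
    · exact (continuous_id.sub Real.continuous_mul_log).continuousOn
    · intro x hx
      simpa [Pi.sub_def] using (hasDerivAt_id' x).sub (Real.hasDerivAt_mul_log hx.1.ne')
    · intro x hx
      simp only [neg_nonneg]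
      exact Real.log_nonpos hx.1.le hx.2.le
  have h2 : IntegrableOn (fun y : ℝ => Real.log y) (Set.Ioc (0:ℝ) 1) :=
    h.neg.congr (Filter.Eventually.of_forall fun y => by simp)
  exact h2

lemma integrableOn_log_mul_exp {c : ℝ} (hc : 0 < c) :
    IntegrableOn (fun y : ℝ => Real.log y * Real.exp (-(c*y))) (Set.Ioi 0) := by
  have hmeas : AEStronglyMeasurable (fun y : ℝ => Real.log y * Real.exp (-(c*y)))
      (volume.restrict (Set.Ioi 0)) :=
    (Real.measurable_log.mul
      (Real.measurable_exp.comp (measurable_const.mul measurable_id).neg)).aestronglyMeasurable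
  rw [← Set.Ioc_union_Ioi_eq_Ioi (zero_le_one' ℝ)]
  apply IntegrableOn.union
  · refine Integrable.mono' log_integrableOn_Ioc.abs
      (hmeas.mono_set Set.Ioc_subset_Ioi_self)
      ((ae_restrict_mem measurableSet_Ioc).mono fun y hy => ?_)
    rw [Real.norm_eq_abs, abs_mul, Real.abs_exp]
    calc |Real.log y| * Real.exp (-(c*y)) ≤ |Real.log y| * 1 := by
          gcongr
          exact Real.exp_le_one_iff.mpr (by nlinarith [hy.1])
      _ = |Real.log y| := mul_one _
  · have hint : IntegrableOn (fun y : ℝ => y * Real.exp (-c * y)) (Set.Ioi 0) := by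
      have := integrableOn_rpow_mul_exp_neg_mul_rpow (p := 1) (s := 1) (by norm_num)
        zero_lt_one hc
      refine this.congr_fun (fun y hy => ?_) measurableSet_Ioi
      simp [Real.rpow_one]
    refine Integrable.mono' (hint.mono_set (Set.Ioi_subset_Ioi zero_le_one))
      (hmeas.mono_set (Set.Ioi_subset_Ioi zero_le_one))
      ((ae_restrict_mem measurableSet_Ioi).mono fun y hy => ?_)
    rw [Real.norm_eq_abs, abs_mul, Real.abs_exp, neg_mul]
    have hy1 : (1:ℝ) < y := hy
    gcongr
    rw [abs_of_nonneg (Real.log_nonneg hy1.le)]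
    linarith [Real.log_le_sub_one_of_pos (by linarith : (0:ℝ) < y)]

lemma integrableOn_abs_log_mul_exp {c : ℝ} (hc : 0 < c) :
    IntegrableOn (fun y : ℝ => |Real.log y| * Real.exp (-(c*y))) (Set.Ioi 0) :=
  (integrableOn_log_mul_exp hc).abs.congr (Filter.Eventually.of_forall fun y => by
    simp [abs_mul, Real.abs_exp])

lemma integrableOn_exp_neg' : IntegrableOn (fun t : ℝ => Real.exp (-t)) (Set.Ioi 0) :=
  (Real.GammaIntegral_convergent one_pos).congr
    (Filter.Eventually.of_forall fun t => by simp [Real.rpow_zero])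

lemma integral_exp_neg_mul {c : ℝ} (hc : 0 < c) :
    ∫ y in Set.Ioi (0:ℝ), Real.exp (-(c*y)) = c⁻¹ := by
  have := MeasureTheory.integral_comp_mul_left_Ioi (fun t : ℝ => Real.exp (-t)) 0 hc
  simp only [mul_zero, integral_exp_neg_Ioi_zero, smul_eq_mul, mul_one] at this
  simpa using this

lemma integral_log_mul_exp_mul {c : ℝ} (hc : 0 < c) :
    ∫ y in Set.Ioi (0:ℝ), Real.log y * Real.exp (-(c*y))
      = -(Real.eulerMascheroniConstant + Real.log c) / c := by
  have hsub : ∫ y in Set.Ioi (0:ℝ), Real.log y * Real.exp (-(c*y))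
      = ∫ y in Set.Ioi (0:ℝ), (fun t => (Real.log t - Real.log c) * Real.exp (-t)) (c * y) := by
    refine setIntegral_congr_fun measurableSet_Ioi fun y hy => ?_
    simp only
    rw [Real.log_mul hc.ne' (ne_of_gt hy)]
    ring_nf
  have hcomp := MeasureTheory.integral_comp_mul_left_Ioi
    (fun t => (Real.log t - Real.log c) * Real.exp (-t)) 0 hc
  rw [mul_zero] at hcomp
  rw [hsub, hcomp]
  have hi1 : IntegrableOn (fun t : ℝ => Real.log t * Real.exp (-t)) (Set.Ioi 0) :=
    (integrableOn_log_mul_exp one_pos).congr (Filter.Eventually.of_forall fun t => by simp)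
  have hsplit : ∫ t in Set.Ioi (0:ℝ), (Real.log t - Real.log c) * Real.exp (-t)
      = (∫ t in Set.Ioi (0:ℝ), Real.log t * Real.exp (-t))
        - Real.log c * ∫ t in Set.Ioi (0:ℝ), Real.exp (-t) := by
    have : (fun t : ℝ => (Real.log t - Real.log c) * Real.exp (-t))
        = fun t : ℝ => Real.log t * Real.exp (-t) - Real.log c * Real.exp (-t) :=
      funext fun t => by ring
    rw [this, integral_sub hi1 (integrableOn_exp_neg'.const_mul _), integral_const_mul]
  rw [hsplit, integral_log_mul_exp_eq, integral_exp_neg_Ioi_zero, smul_eq_mul]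
  field_simp
  ring

lemma hasSum_inv_sq : HasSum (fun j : ℕ => (1:ℝ) / ((j:ℝ)+1)^2) (π^2/6) := by
  have h0 := hasSum_zeta_two
  rw [← hasSum_nat_add_iff' 1] at h0
  simpa using h0

lemma hasSum_eta_two : HasSum (fun j : ℕ => (-1:ℝ)^j / ((j:ℝ)+1)^2) (π^2/12) := by
  have hb := hasSum_inv_sq
  have hg : HasSum (fun j : ℕ => (1:ℝ) / ((j:ℝ)+1)^2 - (-1:ℝ)^j / ((j:ℝ)+1)^2) (π^2/12) := by
    have hinj : Function.Injective (fun k : ℕ => 2*k+1) := fun a b h => by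
      simpa using h
    have hsupp : ∀ j ∉ Set.range (fun k : ℕ => 2*k+1),
        (1:ℝ) / ((j:ℝ)+1)^2 - (-1:ℝ)^j / ((j:ℝ)+1)^2 = 0 := by
      intro j hj
      rcases Nat.even_or_odd j with h | h
      · rw [h.neg_one_pow]; ring
      · obtain ⟨k, hk⟩ := h
        exact absurd ⟨k, hk.symm⟩ hj
    rw [← Function.Injective.hasSum_iff hinj hsupp]
    have hfun : ((fun j : ℕ => (1:ℝ)/((j:ℝ)+1)^2 - (-1:ℝ)^j/((j:ℝ)+1)^2) ∘ fun k : ℕ => 2*k+1)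
        = fun k : ℕ => 1/2 * ((1:ℝ)/((k:ℝ)+1)^2) := by
      funext k
      simp only [Function.comp_apply]
      rw [Odd.neg_one_pow ⟨k, rfl⟩]
      push_cast
      have hk : ((k:ℝ)+1) ≠ 0 := by positivity
      field_simp
      ring
    rw [hfun]
    have : π^2/12 = 1/2 * (π^2/6) := by ring
    rw [this]
    exact hb.mul_left _
  have hsum := hb.sub hg
  have hfun2 : (fun j : ℕ => (1:ℝ)/((j:ℝ)+1)^2 - ((1:ℝ)/((j:ℝ)+1)^2 - (-1:ℝ)^j/((j:ℝ)+1)^2))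
      = fun j : ℕ => (-1:ℝ)^j/((j:ℝ)+1)^2 := funext fun j => by ring
  rw [hfun2] at hsum
  convert hsum using 1
  · rfl
  ring

lemma summable_aux_rpow : Summable (fun j : ℕ => ((j:ℝ)+1) ^ (-(3/2):ℝ)) := by
  have h1 : Summable (fun n : ℕ => ((n:ℝ)) ^ (-(3/2):ℝ)) :=
    Real.summable_nat_rpow.mpr (by norm_num)
  have h2 := (summable_nat_add_iff (f := fun n : ℕ => ((n:ℝ)) ^ (-(3/2):ℝ)) 1).mpr h1
  exact h2.congr fun n => by push_cast; ring_nf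

lemma log_div_sq_le (j : ℕ) :
    Real.log ((j:ℝ)+1) / ((j:ℝ)+1)^2 ≤ 2 * ((j:ℝ)+1) ^ (-(3/2):ℝ) := by
  set x : ℝ := (j:ℝ)+1 with hxdef
  have hx1 : (1:ℝ) ≤ x := by simp [hxdef]
  have hx0 : (0:ℝ) < x := lt_of_lt_of_le one_pos hx1
  have hlog : Real.log x ≤ x ^ ((1:ℝ)/2) / (1/2) :=
    Real.log_le_rpow_div hx0.le (by norm_num)
  have hx2 : x^2 = x ^ ((2:ℝ)) := by
    rw [← Real.rpow_natCast x 2]; norm_num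
  calc Real.log x / x^2 ≤ (x ^ ((1:ℝ)/2) / (1/2)) / x^2 := by
        gcongr
    _ = 2 * (x ^ ((1:ℝ)/2) / x ^ ((2:ℝ))) := by rw [← hx2]; ring
    _ = 2 * x ^ ((1:ℝ)/2 - 2) := by rw [← Real.rpow_sub hx0]
    _ = 2 * x ^ (-(3/2):ℝ) := by norm_num

lemma summable_log_div_sq : Summable (fun j : ℕ => Real.log ((j:ℝ)+1) / ((j:ℝ)+1)^2) := by
  refine Summable.of_nonneg_of_le (fun j => ?_) (fun j => log_div_sq_le j)
    (summable_aux_rpow.mul_left 2)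
  have : (0:ℝ) ≤ Real.log ((j:ℝ)+1) :=
    Real.log_nonneg (by linarith [Nat.cast_nonneg (α := ℝ) j])
  positivity

lemma exp_term_eq (n : ℕ) (y : ℝ) :
    Real.exp (-(((n:ℝ)+1)*y)) = (Real.exp (-y))^(n+1) := by
  rw [← Real.exp_nat_mul]
  push_cast
  ring_nf

lemma hasSum_pointwise (w : ℝ → ℝ) {y : ℝ} (hy : 0 < y) :
    HasSum (fun j : ℕ => ((-1:ℝ)^j / ((j:ℝ)+1)) * (w y * Real.exp (-(((j:ℝ)+1)*y))))
      (w y * Real.log (1 + Real.exp (-y))) := by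
  have habs : |(-Real.exp (-y))| < 1 := by
    rw [abs_neg, Real.abs_exp]
    exact Real.exp_lt_one_iff.mpr (by linarith)
  have h := (Real.hasSum_pow_div_log_of_abs_lt_one habs).neg.mul_left (w y)
  rw [sub_neg_eq_add, neg_neg] at h
  refine h.congr_fun fun n => ?_
  rw [exp_term_eq n y, neg_pow (Real.exp (-y)) (n+1), pow_succ (-1:ℝ) n]
  have hn : ((n:ℝ)+1) ≠ 0 := by positivity
  field_simp

lemma hasSum_integral_weight (w : ℝ → ℝ)
    (hw : ∀ c : ℝ, 0 < c → IntegrableOn (fun y => w y * Real.exp (-(c*y))) (Set.Ioi 0))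
    (hsum : Summable (fun j : ℕ =>
      (∫ y in Set.Ioi (0:ℝ), |w y| * Real.exp (-(((j:ℝ)+1)*y))) / ((j:ℝ)+1))) :
    HasSum (fun j : ℕ =>
        ((-1:ℝ)^j / ((j:ℝ)+1)) * ∫ y in Set.Ioi (0:ℝ), w y * Real.exp (-(((j:ℝ)+1)*y)))
      (∫ y in Set.Ioi (0:ℝ), w y * Real.log (1 + Real.exp (-y))) := by
  set F : ℕ → ℝ → ℝ :=
    fun j y => ((-1:ℝ)^j / ((j:ℝ)+1)) * (w y * Real.exp (-(((j:ℝ)+1)*y))) with hF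
  have hjpos : ∀ j : ℕ, (0:ℝ) < (j:ℝ)+1 := fun j => by positivity
  have hF_int : ∀ j : ℕ, Integrable (F j) (volume.restrict (Set.Ioi 0)) :=
    fun j => ((hw ((j:ℝ)+1) (hjpos j)).const_mul _)
  have hnorm : ∀ j : ℕ, (∫ y in Set.Ioi (0:ℝ), ‖F j y‖)
      = (∫ y in Set.Ioi (0:ℝ), |w y| * Real.exp (-(((j:ℝ)+1)*y))) / ((j:ℝ)+1) := by
    intro j
    have : (fun y => ‖F j y‖)
        = fun y => ((j:ℝ)+1)⁻¹ * (|w y| * Real.exp (-(((j:ℝ)+1)*y))) := by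
      funext y
      rw [hF]
      simp only [Real.norm_eq_abs, abs_mul, abs_div, abs_pow, abs_neg, abs_one, one_pow,
        Real.abs_exp, abs_of_pos (hjpos j)]
      ring
    rw [this, integral_const_mul]
    ring
  have hF_sum : Summable fun j : ℕ => ∫ y in Set.Ioi (0:ℝ), ‖F j y‖ :=
    hsum.congr fun j => (hnorm j).symm
  have key := MeasureTheory.hasSum_integral_of_summable_integral_norm hF_int hF_sum
  have h1 : ∀ j : ℕ, (∫ y in Set.Ioi (0:ℝ), F j y)
      = ((-1:ℝ)^j / ((j:ℝ)+1)) * ∫ y in Set.Ioi (0:ℝ), w y * Real.exp (-(((j:ℝ)+1)*y)) := by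
    intro j
    rw [hF]
    exact integral_const_mul _ _
  have h2 : (∫ y in Set.Ioi (0:ℝ), ∑' j : ℕ, F j y)
      = ∫ y in Set.Ioi (0:ℝ), w y * Real.log (1 + Real.exp (-y)) := by
    refine setIntegral_congr_fun measurableSet_Ioi fun y hy => ?_
    exact (hasSum_pointwise w hy).tsum_eq
  rw [h2] at key
  exact key.congr_fun fun j => (h1 j).symm

end Aux

lemma integral_log_one_add_exp :
    ∫ y in Set.Ioi (0:ℝ), Real.log (1 + Real.exp (-y)) = π^2/12 := by
  have hw : ∀ c : ℝ, 0 < c →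
      IntegrableOn (fun y : ℝ => (1:ℝ) * Real.exp (-(c*y))) (Set.Ioi 0) := fun c hc =>
    (exp_neg_integrableOn_Ioi 0 hc).congr (Filter.Eventually.of_forall fun y => by
      simp [neg_mul])
  have hIval : ∀ j : ℕ, (∫ y in Set.Ioi (0:ℝ), |(1:ℝ)| * Real.exp (-(((j:ℝ)+1)*y)))
      = ((j:ℝ)+1)⁻¹ := by
    intro j
    simp only [abs_one, one_mul]
    exact integral_exp_neg_mul (by positivity)
  have hsum : Summable (fun j : ℕ =>
      (∫ y in Set.Ioi (0:ℝ), |(1:ℝ)| * Real.exp (-(((j:ℝ)+1)*y))) / ((j:ℝ)+1)) := by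
    refine hasSum_inv_sq.summable.congr fun j => ?_
    rw [hIval j]
    have : ((j:ℝ)+1) ≠ 0 := by positivity
    field_simp
  have key := hasSum_integral_weight (fun _ => (1:ℝ)) hw hsum
  have hterm : ∀ j : ℕ,
      ((-1:ℝ)^j / ((j:ℝ)+1)) * ∫ y in Set.Ioi (0:ℝ), (1:ℝ) * Real.exp (-(((j:ℝ)+1)*y))
        = (-1:ℝ)^j / ((j:ℝ)+1)^2 := by
    intro j
    have h1 : (∫ y in Set.Ioi (0:ℝ), (1:ℝ) * Real.exp (-(((j:ℝ)+1)*y))) = ((j:ℝ)+1)⁻¹ := by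
      simpa using hIval j
    rw [h1]
    have : ((j:ℝ)+1) ≠ 0 := by positivity
    field_simp
  have key2 : HasSum (fun j : ℕ => (-1:ℝ)^j / ((j:ℝ)+1)^2)
      (∫ y in Set.Ioi (0:ℝ), (1:ℝ) * Real.log (1 + Real.exp (-y))) :=
    key.congr_fun fun j => (hterm j).symm
  have h3 := hasSum_eta_two.unique key2
  have heq : (∫ y in Set.Ioi (0:ℝ), (1:ℝ) * Real.log (1 + Real.exp (-y)))
      = ∫ y in Set.Ioi (0:ℝ), Real.log (1 + Real.exp (-y)) :=
    setIntegral_congr_fun measurableSet_Ioi fun y _ => one_mul _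
  rw [← heq]
  exact h3.symm

lemma integral_log_mul_log_one_add_exp :
    ∫ y in Set.Ioi (0:ℝ), Real.log y * Real.log (1 + Real.exp (-y))
      = -(Real.eulerMascheroniConstant * π^2/12)
        - ∑' j : ℕ, (-1:ℝ)^j * Real.log ((j:ℝ)+1) / ((j:ℝ)+1)^2 := by
  have hS : Summable (fun j : ℕ => (-1:ℝ)^j * Real.log ((j:ℝ)+1) / ((j:ℝ)+1)^2) := by
    refine Summable.of_norm (summable_log_div_sq.congr fun j => ?_)
    have h0 : (0:ℝ) ≤ Real.log ((j:ℝ)+1) :=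
      Real.log_nonneg (by linarith [Nat.cast_nonneg (α := ℝ) j])
    have h1 : (0:ℝ) < ((j:ℝ)+1)^2 := by positivity
    rw [Real.norm_eq_abs, abs_div, abs_mul, abs_pow, abs_neg, abs_one, one_pow, one_mul,
      abs_of_nonneg h0, abs_of_pos h1]
  -- summability of norm integrals
  set C : ℝ := ∫ t in Set.Ioi (0:ℝ), |Real.log t| * Real.exp (-t) with hC
  have hC_int : IntegrableOn (fun t : ℝ => |Real.log t| * Real.exp (-t)) (Set.Ioi 0) :=
    (integrableOn_abs_log_mul_exp one_pos).congr (Filter.Eventually.of_forall fun t => by simp)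
  have habs_le : ∀ c : ℝ, 1 ≤ c →
      (∫ y in Set.Ioi (0:ℝ), |Real.log y| * Real.exp (-(c*y)))
        ≤ (C + Real.log c) / c := by
    intro c hc1
    have hc : (0:ℝ) < c := lt_of_lt_of_le one_pos hc1
    have hlogc : (0:ℝ) ≤ Real.log c := Real.log_nonneg hc1
    have hsub : ∫ y in Set.Ioi (0:ℝ), |Real.log y| * Real.exp (-(c*y))
        = ∫ y in Set.Ioi (0:ℝ),
            (fun t => |Real.log t - Real.log c| * Real.exp (-t)) (c * y) := by
      refine setIntegral_congr_fun measurableSet_Ioi fun y hy => ?_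
      simp only
      rw [Real.log_mul hc.ne' (ne_of_gt hy)]
      ring_nf
    have hcomp := MeasureTheory.integral_comp_mul_left_Ioi
      (fun t => |Real.log t - Real.log c| * Real.exp (-t)) 0 hc
    rw [mul_zero] at hcomp
    have hbound_int : IntegrableOn
        (fun t : ℝ => (|Real.log t| + Real.log c) * Real.exp (-t)) (Set.Ioi 0) := by
      have : (fun t : ℝ => (|Real.log t| + Real.log c) * Real.exp (-t))
          = fun t : ℝ => |Real.log t| * Real.exp (-t) + Real.log c * Real.exp (-t) :=
        funext fun t => by ring
      rw [this]
      exact hC_int.add (integrableOn_exp_neg'.const_mul _)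
    have hg_int : IntegrableOn
        (fun t : ℝ => |Real.log t - Real.log c| * Real.exp (-t)) (Set.Ioi 0) := by
      refine Integrable.mono' hbound_int
        (((Real.measurable_log.sub measurable_const).abs.mul
          (Real.measurable_exp.comp measurable_neg)).aestronglyMeasurable)
        (Filter.Eventually.of_forall fun t => ?_)
      rw [Real.norm_eq_abs, abs_mul, abs_abs, Real.abs_exp]
      have : |Real.log t - Real.log c| ≤ |Real.log t| + Real.log c := by
        calc |Real.log t - Real.log c| ≤ |Real.log t| + |Real.log c| := abs_sub _ _
          _ = |Real.log t| + Real.log c := by rw [abs_of_nonneg hlogc]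
      exact mul_le_mul_of_nonneg_right this (Real.exp_nonneg _)
    have hmono : (∫ t in Set.Ioi (0:ℝ), |Real.log t - Real.log c| * Real.exp (-t))
        ≤ ∫ t in Set.Ioi (0:ℝ), (|Real.log t| + Real.log c) * Real.exp (-t) := by
      refine integral_mono_ae hg_int hbound_int (Filter.Eventually.of_forall fun t => ?_)
      have : |Real.log t - Real.log c| ≤ |Real.log t| + Real.log c := by
        calc |Real.log t - Real.log c| ≤ |Real.log t| + |Real.log c| := abs_sub _ _
          _ = |Real.log t| + Real.log c := by rw [abs_of_nonneg hlogc]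
      exact mul_le_mul_of_nonneg_right this (Real.exp_nonneg _)
    have hval : (∫ t in Set.Ioi (0:ℝ), (|Real.log t| + Real.log c) * Real.exp (-t))
        = C + Real.log c := by
      have : (fun t : ℝ => (|Real.log t| + Real.log c) * Real.exp (-t))
          = fun t : ℝ => |Real.log t| * Real.exp (-t) + Real.log c * Real.exp (-t) :=
        funext fun t => by ring
      rw [this, integral_add hC_int (integrableOn_exp_neg'.const_mul _), integral_const_mul,
        integral_exp_neg_Ioi_zero, mul_one, hC]
    rw [hsub, hcomp, smul_eq_mul]
    rw [div_eq_inv_mul]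
    have hc' : (0:ℝ) ≤ c⁻¹ := by positivity
    exact mul_le_mul_of_nonneg_left (le_of_le_of_eq hmono hval) hc'
  have hsum : Summable (fun j : ℕ =>
      (∫ y in Set.Ioi (0:ℝ), |Real.log y| * Real.exp (-(((j:ℝ)+1)*y))) / ((j:ℝ)+1)) := by
    have hmaj : Summable (fun j : ℕ => (C + Real.log ((j:ℝ)+1)) / ((j:ℝ)+1)^2) := by
      have h1 : Summable (fun j : ℕ => C * ((1:ℝ)/((j:ℝ)+1)^2)) :=
        hasSum_inv_sq.summable.mul_left C
      have h2 := summable_log_div_sq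
      refine (h1.add h2).congr fun j => ?_
      have : ((j:ℝ)+1) ≠ 0 := by positivity
      field_simp
    refine Summable.of_nonneg_of_le (fun j => ?_) (fun j => ?_) hmaj
    · have hjpos : (0:ℝ) < (j:ℝ)+1 := by positivity
      have : 0 ≤ ∫ y in Set.Ioi (0:ℝ), |Real.log y| * Real.exp (-(((j:ℝ)+1)*y)) :=
        setIntegral_nonneg measurableSet_Ioi fun y _ => by positivity
      positivity
    · have hjpos : (0:ℝ) < (j:ℝ)+1 := by positivity
      have h1 := habs_le ((j:ℝ)+1) (by linarith [Nat.cast_nonneg (α := ℝ) j])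
      calc (∫ y in Set.Ioi (0:ℝ), |Real.log y| * Real.exp (-(((j:ℝ)+1)*y))) / ((j:ℝ)+1)
          ≤ ((C + Real.log ((j:ℝ)+1)) / ((j:ℝ)+1)) / ((j:ℝ)+1) := by gcongr
        _ = (C + Real.log ((j:ℝ)+1)) / ((j:ℝ)+1)^2 := by
            rw [div_div]; ring_nf
  have key := hasSum_integral_weight Real.log (fun c hc => integrableOn_log_mul_exp hc) hsum
  have hterm : ∀ j : ℕ,
      ((-1:ℝ)^j / ((j:ℝ)+1)) * ∫ y in Set.Ioi (0:ℝ), Real.log y * Real.exp (-(((j:ℝ)+1)*y))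
        = (-Real.eulerMascheroniConstant) * ((-1:ℝ)^j / ((j:ℝ)+1)^2)
          + (-((-1:ℝ)^j * Real.log ((j:ℝ)+1) / ((j:ℝ)+1)^2)) := by
    intro j
    rw [integral_log_mul_exp_mul (by positivity : (0:ℝ) < (j:ℝ)+1)]
    have : ((j:ℝ)+1) ≠ 0 := by positivity
    field_simp
    ring
  have hRHS : HasSum (fun j : ℕ =>
      (-Real.eulerMascheroniConstant) * ((-1:ℝ)^j / ((j:ℝ)+1)^2)
        + (-((-1:ℝ)^j * Real.log ((j:ℝ)+1) / ((j:ℝ)+1)^2)))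
      ((-Real.eulerMascheroniConstant) * (π^2/12)
        + (-(∑' j : ℕ, (-1:ℝ)^j * Real.log ((j:ℝ)+1) / ((j:ℝ)+1)^2))) :=
    (hasSum_eta_two.mul_left _).add hS.hasSum.neg
  have := hRHS.unique (key.congr_fun fun j => (hterm j).symm)
  rw [← this]
  ring

lemma integrableOn_log_one_add_exp :
    IntegrableOn (fun y : ℝ => Real.log (1 + Real.exp (-y))) (Set.Ioi 0) := by
  have hcont : Continuous (fun y : ℝ => Real.log (1 + Real.exp (-y))) :=
    (continuous_const.add (Real.continuous_exp.comp continuous_neg)).log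
      fun y => (by positivity : (0:ℝ) < 1 + Real.exp (-y)).ne'
  refine Integrable.mono' integrableOn_exp_neg' hcont.aestronglyMeasurable
    (Filter.Eventually.of_forall fun y => ?_)
  have hpos : (0:ℝ) < 1 + Real.exp (-y) := by positivity
  have hge1 : (1:ℝ) ≤ 1 + Real.exp (-y) := by linarith [Real.exp_pos (-y)]
  rw [Real.norm_eq_abs, abs_of_nonneg (Real.log_nonneg hge1)]
  have := Real.log_le_sub_one_of_pos hpos
  linarith

lemma integrableOn_log_mul_log_one_add_exp :
    IntegrableOn (fun y : ℝ => Real.log y * Real.log (1 + Real.exp (-y))) (Set.Ioi 0) := by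
  have hcont : Continuous (fun y : ℝ => Real.log (1 + Real.exp (-y))) :=
    (continuous_const.add (Real.continuous_exp.comp continuous_neg)).log
      fun y => (by positivity : (0:ℝ) < 1 + Real.exp (-y)).ne'
  have hM : IntegrableOn (fun y : ℝ => |Real.log y| * Real.exp (-y)) (Set.Ioi 0) :=
    (integrableOn_abs_log_mul_exp one_pos).congr
      (Filter.Eventually.of_forall fun t => by simp only [one_mul])
  refine Integrable.mono' hM
    (Real.measurable_log.aestronglyMeasurable.mul hcont.aestronglyMeasurable)
    (Filter.Eventually.of_forall fun y => ?_)
  have hpos : (0:ℝ) < 1 + Real.exp (-y) := by positivity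
  have hge1 : (1:ℝ) ≤ 1 + Real.exp (-y) := by linarith [Real.exp_pos (-y)]
  rw [Real.norm_eq_abs, abs_mul, abs_of_nonneg (Real.log_nonneg hge1)]
  have h1 : Real.log (1 + Real.exp (-y)) ≤ Real.exp (-y) := by
    have := Real.log_le_sub_one_of_pos hpos
    linarith
  gcongr


/-- For every real `β` with `0 < β < 1`, the two-term truncated asymptotic expression for
`log Z^F` satisfies the closed-form evaluation
`-(1/(β log β)) ∫_0^∞ (1 + log y / log β) log (1 + e^{-y}) dy
  = (1/(β log β)) [ -π²/12 + (1/log β)(γ π²/12 + ∑_{k ≥ 1} (-1)^{k-1} (log k)/k²) ]`,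
where `γ` is the Euler–Mascheroni constant, the integral on the left being finite.
(The series is indexed here by `k = j + 1` with `j : ℕ`.) -/
theorem truncated_asymptotic_log_partition_function
    {β : ℝ} (hβ0 : 0 < β) (hβ1 : β < 1) :
    IntegrableOn
      (fun y : ℝ => (1 + Real.log y / Real.log β) * Real.log (1 + Real.exp (-y)))
      (Set.Ioi 0) ∧
    -(1 / (β * Real.log β)) *
        ∫ y in Set.Ioi (0 : ℝ),
          (1 + Real.log y / Real.log β) * Real.log (1 + Real.exp (-y))
      = (1 / (β * Real.log β)) *
          (-(π ^ 2 / 12) +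
            (1 / Real.log β) *
              (Real.eulerMascheroniConstant * π ^ 2 / 12
                + ∑' j : ℕ, (-1 : ℝ) ^ j * Real.log (j + 1) / (j + 1) ^ 2)) := by
  have hL : Real.log β < 0 := Real.log_neg hβ0 hβ1
  have hLne : Real.log β ≠ 0 := hL.ne
  have hfun : (fun y : ℝ => (1 + Real.log y / Real.log β) * Real.log (1 + Real.exp (-y)))
      = fun y : ℝ => Real.log (1 + Real.exp (-y))
          + (Real.log β)⁻¹ * (Real.log y * Real.log (1 + Real.exp (-y))) :=
    funext fun y => by field_simp
  have hint : IntegrableOn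
      (fun y : ℝ => (1 + Real.log y / Real.log β) * Real.log (1 + Real.exp (-y)))
      (Set.Ioi 0) := by
    rw [hfun]
    exact integrableOn_log_one_add_exp.add
      (integrableOn_log_mul_log_one_add_exp.const_mul _)
  refine ⟨hint, ?_⟩
  have hval : (∫ y in Set.Ioi (0:ℝ),
      (1 + Real.log y / Real.log β) * Real.log (1 + Real.exp (-y)))
      = π^2/12 + (Real.log β)⁻¹ *
          (-(Real.eulerMascheroniConstant * π^2/12)
            - ∑' j : ℕ, (-1:ℝ)^j * Real.log ((j:ℝ)+1) / ((j:ℝ)+1)^2) := by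
    rw [hfun, integral_add integrableOn_log_one_add_exp
      (integrableOn_log_mul_log_one_add_exp.const_mul _), integral_const_mul,
      integral_log_one_add_exp, integral_log_mul_log_one_add_exp]
  rw [hval]
  field_simp
  ring
end
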